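/- Let D(u,t) ∈ ℂ[[u₁,…,uₙ]][t] be monic in t of degree m with D(0,t) = t^m, let F(u,t) ∈ ℂ[[u₁,…,uₙ,t]], and let R(u,t) ∈ ℂ[[u]][t] be the Weierstrass remainder of F upon division by D (the unique polynomial in t of degree < m with F = QD + R for some Q ∈ ℂ[[u,t]]). If t^k divides F(u,t), then every coefficient of R(u,t) lies in the ideal I^⌊k/m⌋, where I = (u₁,…,uₙ). -/

import Mathlib

lemma aux_mem_span_X {n : ℕ} (f : MvPowerSeries (Fin n) ℂ)
    (hf : MvPowerSeries.constantCoeff f = 0) :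
    f ∈ Ideal.span (Set.range (MvPowerSeries.X : Fin n → MvPowerSeries (Fin n) ℂ)) := by
  classical
  set g : Fin n → MvPowerSeries (Fin n) ℂ := fun i =>
    (fun e => if ∀ j < i, e j = 0 then
      MvPowerSeries.coeff (e + Finsupp.single i 1) f else 0 : (Fin n →₀ ℕ) → ℂ) with hg
  have hgcoeff : ∀ i e, MvPowerSeries.coeff e (g i) =
      if ∀ j < i, e j = 0 then MvPowerSeries.coeff (e + Finsupp.single i 1) f else 0 := by
    intro i e; rfl
  have hsum : f = ∑ i : Fin n, MvPowerSeries.X i * g i := by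
    ext d
    rw [map_sum]
    by_cases hd : d = 0
    · subst hd
      simp [MvPowerSeries.coeff_zero_X_mul, MvPowerSeries.coeff_zero_eq_constantCoeff, hf]
    · have hsupp : d.support.Nonempty := Finsupp.support_nonempty_iff.mpr hd
      set i₀ := d.support.min' hsupp with hi₀
      have hi₀mem : i₀ ∈ d.support := Finset.min'_mem _ _
      have hdi₀ : d i₀ ≠ 0 := Finsupp.mem_support_iff.mp hi₀mem
      have hmin : ∀ j, j < i₀ → d j = 0 := by
        intro j hj
        by_contra h
        exact absurd (Finset.min'_le _ _ (Finsupp.mem_support_iff.mpr h)) (not_le.mpr hj)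
      rw [Finset.sum_eq_single i₀]
      · have hle : Finsupp.single i₀ 1 ≤ d :=
          Finsupp.single_le_iff.mpr (Nat.one_le_iff_ne_zero.mpr hdi₀)
        rw [MvPowerSeries.X, MvPowerSeries.coeff_monomial_mul, if_pos hle, one_mul, hgcoeff,
          if_pos, tsub_add_cancel_of_le hle]
        intro j hj
        rw [Finsupp.tsub_apply, hmin j hj,
          Finsupp.single_eq_of_ne' (fun h => absurd h.symm (ne_of_lt hj))]
        simp
      · intro i _ hne
        rw [MvPowerSeries.X, MvPowerSeries.coeff_monomial_mul]
        split_ifs with h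
        · rw [one_mul, hgcoeff, if_neg]
          intro hall
          have hii : i₀ < i := by
            have : i₀ ≤ i := Finset.min'_le _ _
              (Finsupp.mem_support_iff.mpr (Nat.one_le_iff_ne_zero.mp (Finsupp.single_le_iff.mp h)))
            exact lt_of_le_of_ne this (fun h' => hne h'.symm)
          have h2 := hall i₀ hii
          rw [Finsupp.tsub_apply, Finsupp.single_eq_of_ne' (ne_of_gt hii)] at h2
          simp only [Nat.sub_zero] at h2
          exact hdi₀ h2
        · rfl
      · intro h; exact absurd (Finset.mem_univ i₀) h
  rw [hsum]
  exact Ideal.sum_mem _ fun i _ => Ideal.mul_mem_right _ _ (Ideal.subset_span ⟨i, rfl⟩)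

theorem weierstrass_remainder_estimate (n m k : ℕ) (hm : 0 < m)
    (D Rem : Polynomial (MvPowerSeries (Fin n) ℂ))
    (F Q : PowerSeries (MvPowerSeries (Fin n) ℂ))
    (hDmonic : D.Monic) (hDdeg : D.natDegree = m)
    (hD0 : ∀ i < m, MvPowerSeries.constantCoeff (D.coeff i) = 0)
    (hRdeg : Rem.degree < (m : ℕ))
    (hdiv : F = Q * (D : PowerSeries (MvPowerSeries (Fin n) ℂ))
      + (Rem : PowerSeries (MvPowerSeries (Fin n) ℂ)))
    (hFk : (PowerSeries.X : PowerSeries (MvPowerSeries (Fin n) ℂ)) ^ k ∣ F) :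
    ∀ i, Rem.coeff i ∈
      (Ideal.span (Set.range (MvPowerSeries.X :
        Fin n → MvPowerSeries (Fin n) ℂ))) ^ (k / m) := by
  set I : Ideal (MvPowerSeries (Fin n) ℂ) := Ideal.span (Set.range (MvPowerSeries.X : Fin n → MvPowerSeries (Fin n) ℂ)) with hI
  have hDmem : ∀ b, b < m → D.coeff b ∈ I := fun b hb => aux_mem_span_X _ (hD0 b hb)
  have hDm : D.coeff m = 1 := by
    rw [← hDdeg]; exact hDmonic.coeff_natDegree
  have hDhigh : ∀ b, m < b → D.coeff b = 0 := fun b hb =>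
    Polynomial.coeff_eq_zero_of_natDegree_lt (hDdeg ▸ hb)
  have hRem0 : ∀ j, m ≤ j → Rem.coeff j = 0 := fun j hj =>
    Polynomial.coeff_eq_zero_of_degree_lt (lt_of_lt_of_le hRdeg (by exact_mod_cast hj))
  have hF0 : ∀ j, j < k → PowerSeries.coeff j F = 0 := fun j hj =>
    PowerSeries.X_pow_dvd_iff.mp hFk j hj
  have hcoeff : ∀ j, PowerSeries.coeff j F =
      (∑ p ∈ Finset.HasAntidiagonal.antidiagonal j, PowerSeries.coeff p.1 Q * D.coeff p.2) + Rem.coeff j := by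
    intro j
    rw [hdiv, map_add, PowerSeries.coeff_mul]
    simp only [Polynomial.coeff_coe]
  have hQ : ∀ s i, i + s * m < k → PowerSeries.coeff i Q ∈ I ^ s := by
    intro s
    induction s with
    | zero => intro i _; simp [Ideal.one_eq_top]
    | succ s ih =>
      intro i hi
      rw [add_mul, one_mul] at hi
      have him : i + m < k := by omega
      have h0 : (∑ p ∈ Finset.HasAntidiagonal.antidiagonal (i + m),
          PowerSeries.coeff p.1 Q * D.coeff p.2) = 0 := by
        have h := hcoeff (i + m)
        rw [hF0 _ him, hRem0 _ (Nat.le_add_left m i), add_zero] at h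
        exact h.symm
      have hmem : ((i, m) : ℕ × ℕ) ∈ Finset.HasAntidiagonal.antidiagonal (i + m) := by simp
      rw [← Finset.add_sum_erase _ _ hmem, hDm, mul_one] at h0
      have hQi : PowerSeries.coeff i Q =
          -∑ p ∈ (Finset.HasAntidiagonal.antidiagonal (i + m)).erase (i, m),
            PowerSeries.coeff p.1 Q * D.coeff p.2 :=
        eq_neg_of_add_eq_zero_left h0
      rw [hQi]
      refine neg_mem (Ideal.sum_mem _ ?_)
      intro p hp
      have hpanti : p.1 + p.2 = i + m :=
        Finset.HasAntidiagonal.mem_antidiagonal.mp (Finset.mem_of_mem_erase hp)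
      have hpne : p ≠ (i, m) := Finset.ne_of_mem_erase hp
      rcases lt_trichotomy p.2 m with h2 | h2 | h2
      · have h1 : p.1 + s * m < k := by omega
        rw [pow_succ]
        exact Ideal.mul_mem_mul (ih p.1 h1) (hDmem p.2 h2)
      · exfalso
        apply hpne
        have : p.1 = i := by omega
        exact Prod.ext this h2
      · rw [hDhigh p.2 h2, mul_zero]
        exact zero_mem _
  intro i
  rcases le_or_gt m i with h | h
  · rw [hRem0 i h]; exact zero_mem _
  rcases lt_or_ge k m with hk | hk
  · rw [Nat.div_eq_of_lt hk]
    simp [Ideal.one_eq_top]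
  · have hik : i < k := lt_of_lt_of_le h hk
    have h0 := hcoeff i
    rw [hF0 i hik] at h0
    have hRi : Rem.coeff i = -∑ p ∈ Finset.HasAntidiagonal.antidiagonal i,
        PowerSeries.coeff p.1 Q * D.coeff p.2 :=
      eq_neg_of_add_eq_zero_right h0.symm
    rw [hRi]
    refine neg_mem (Ideal.sum_mem _ ?_)
    intro p hp
    have hpanti : p.1 + p.2 = i := Finset.HasAntidiagonal.mem_antidiagonal.mp hp
    have hq1 : 1 ≤ k / m := (Nat.one_le_div_iff hm).mpr hk
    have hQmem : PowerSeries.coeff p.1 Q ∈ I ^ (k / m - 1) := by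
      apply hQ
      have h1 : p.1 < m := by omega
      have h2 : k / m * m ≤ k := Nat.div_mul_le_self k m
      have h3 : (k / m - 1) * m + m = k / m * m := by
        conv_rhs => rw [← Nat.sub_add_cancel hq1]
        ring
      calc p.1 + (k / m - 1) * m < m + (k / m - 1) * m := by omega
        _ = k / m * m := by omega
        _ ≤ k := h2
    have hDp : D.coeff p.2 ∈ I := hDmem p.2 (by omega)
    have hqe : k / m = (k / m - 1) + 1 := (Nat.sub_add_cancel hq1).symm
    rw [hqe, pow_succ]
    exact Ideal.mul_mem_mul hQmem hDp
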